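/- arXiv:2306.02132 — 4 statements merged into one kernel-verified Lean document; each statement's English description precedes it below -/
import Mathlib

section
/- For every N ≥ 2, the intersection P_N ∩ H of the crosspolytope with the hyperplane H equals the convex hull of the finite set V = {(e_p − e_q)/2 : p, q ∈ {1,…,N}, p ≠ q}. -/
open Finset

/-- The crosspolytope `P_N = {x ∈ ℝ^N : ∑ |x i| ≤ 1}`. -/
def crossPolytope (N : ℕ) : Set (Fin N → ℝ) := {x | ∑ i, |x i| ≤ 1}

/-- The hyperplane `H = {x ∈ ℝ^N : ∑ x i = 0}`. -/
def hyperplaneH (N : ℕ) : Set (Fin N → ℝ) := {x | ∑ i, x i = 0}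

/-- The vertex set `V = {(e_p − e_q)/2 : p ≠ q}`. -/
def vertexSetV (N : ℕ) : Set (Fin N → ℝ) :=
  {v | ∃ p q : Fin N, p ≠ q ∧ v = (1 / 2 : ℝ) • (Pi.single p 1 - Pi.single q 1)}

theorem crossPolytope_inter_hyperplane_eq_convexHull (N : ℕ) (hN : 2 ≤ N) :
    crossPolytope N ∩ hyperplaneH N = convexHull ℝ (vertexSetV N) := by
  obtain ⟨i0, i1, h01⟩ : ∃ i0 i1 : Fin N, i0 ≠ i1 :=
    ⟨⟨0, by omega⟩, ⟨1, by omega⟩, by simp [Fin.ext_iff]⟩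
  have hv01 : (1 / 2 : ℝ) • (Pi.single i0 1 - Pi.single i1 1) ∈ vertexSetV N := ⟨i0, i1, h01, rfl⟩
  have hv10 : (1 / 2 : ℝ) • (Pi.single i1 1 - Pi.single i0 1) ∈ vertexSetV N := ⟨i1, i0, h01.symm, rfl⟩
  apply Set.Subset.antisymm
  · rintro x ⟨hx1, hx2⟩
    replace hx1 : ∑ i, |x i| ≤ 1 := hx1
    replace hx2 : ∑ i, x i = 0 := hx2
    set xp : Fin N → ℝ := fun i => max (x i) 0 with hxp
    set xm : Fin N → ℝ := fun i => max (-x i) 0 with hxm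
    have hxp0 : ∀ i, 0 ≤ xp i := fun i => le_max_right _ _
    have hxm0 : ∀ i, 0 ≤ xm i := fun i => le_max_right _ _
    have hsub : ∀ i, xp i - xm i = x i := fun i => max_zero_sub_max_neg_zero_eq_self (x i)
    have habs : ∀ i, xp i + xm i = |x i| := fun i => max_zero_add_max_neg_zero_eq_abs_self (x i)
    have hprod : ∀ i, xp i * xm i = 0 := by
      intro i
      rcases le_total (x i) 0 with h | h
      · have : xp i = 0 := max_eq_right h
        rw [this, zero_mul]
      · have : xm i = 0 := max_eq_right (by linarith)
        rw [this, mul_zero]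
    set s : ℝ := ∑ i, xp i with hsdef
    have hs0 : 0 ≤ s := Finset.sum_nonneg fun i _ => hxp0 i
    have hsm : ∑ i, xm i = s := by
      have h1 : ∑ i, (xp i - xm i) = 0 := by
        rw [Finset.sum_congr rfl fun i _ => hsub i, hx2]
      rw [Finset.sum_sub_distrib] at h1
      linarith
    have h2s : 2 * s ≤ 1 := by
      have h1 : ∑ i, (xp i + xm i) = ∑ i, |x i| :=
        Finset.sum_congr rfl fun i _ => habs i
      rw [Finset.sum_add_distrib, hsm] at h1
      linarith
    rcases eq_or_lt_of_le hs0 with hs | hs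
    · -- s = 0, so x = 0
      have hx0 : x = 0 := by
        funext i
        have hp : xp i = 0 := by
          have := (Finset.sum_eq_zero_iff_of_nonneg (fun i _ => hxp0 i)).1 hs.symm i (mem_univ i)
          exact this
        have hm : xm i = 0 := by
          have := (Finset.sum_eq_zero_iff_of_nonneg (fun i _ => hxm0 i)).1
            (by rw [hsm]; exact hs.symm) i (mem_univ i)
          exact this
        have := hsub i
        simp only [hp, hm, sub_zero] at this
        simpa using this.symm
      have hcomb := (convex_convexHull ℝ (vertexSetV N))
        (subset_convexHull ℝ _ hv01) (subset_convexHull ℝ _ hv10)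
        (by norm_num : (0:ℝ) ≤ 1/2) (by norm_num : (0:ℝ) ≤ 1/2) (by norm_num)
      have heq : (1/2 : ℝ) • ((1 / 2 : ℝ) • (Pi.single i0 (1:ℝ) - Pi.single i1 1))
          + (1/2 : ℝ) • ((1 / 2 : ℝ) • (Pi.single i1 (1:ℝ) - Pi.single i0 1)) = x := by
        rw [hx0]; funext i
        simp only [Pi.add_apply, Pi.smul_apply, Pi.sub_apply, Pi.single_apply, smul_eq_mul,
          Pi.zero_apply]
        ring
      rwa [heq] at hcomb
    · -- s > 0
      rw [_root_.convexHull_eq]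
      refine ⟨Fin N × Fin N, univ,
        fun pq => 2 * xp pq.1 * xm pq.2 / s
          + (if pq = (i0, i1) then (1 - 2*s)/2 else 0)
          + (if pq = (i1, i0) then (1 - 2*s)/2 else 0),
        fun pq => if pq.1 = pq.2 then (1/2 : ℝ) • (Pi.single i0 1 - Pi.single i1 1)
          else (1/2 : ℝ) • (Pi.single pq.1 1 - Pi.single pq.2 1),
        ?_, ?_, ?_, ?_⟩
      · intro pq _
        have h1 : 0 ≤ 2 * xp pq.1 * xm pq.2 / s :=
          div_nonneg (by positivity) hs0
        have h2 : (0:ℝ) ≤ (1 - 2*s)/2 := by linarith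
        positivity
      · rw [Finset.sum_add_distrib, Finset.sum_add_distrib,
          Finset.sum_ite_eq' univ (i0, i1), Finset.sum_ite_eq' univ (i1, i0)]
        have hmain : ∑ pq : Fin N × Fin N, 2 * xp pq.1 * xm pq.2 / s = 2 * s := by
          rw [Fintype.sum_prod_type]
          have hinner : ∀ p : Fin N, ∑ q, 2 * xp p * xm q / s = 2 * xp p := by
            intro p
            rw [← Finset.sum_div, ← Finset.mul_sum, hsm]
            field_simp
          rw [Finset.sum_congr rfl fun p _ => hinner p, ← Finset.mul_sum]
        rw [hmain]
        simp only [mem_univ, if_true]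
        ring
      · intro pq _
        dsimp only
        split
        · exact hv01
        · exact ⟨pq.1, pq.2, by assumption, rfl⟩
      · rw [Finset.centerMass_eq_of_sum_1]
        swap
        · rw [Finset.sum_add_distrib, Finset.sum_add_distrib,
            Finset.sum_ite_eq' univ (i0, i1), Finset.sum_ite_eq' univ (i1, i0)]
          have hmain : ∑ pq : Fin N × Fin N, 2 * xp pq.1 * xm pq.2 / s = 2 * s := by
            rw [Fintype.sum_prod_type]
            have hinner : ∀ p : Fin N, ∑ q, 2 * xp p * xm q / s = 2 * xp p := by
              intro p
              rw [← Finset.sum_div, ← Finset.mul_sum, hsm]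
              field_simp
            rw [Finset.sum_congr rfl fun p _ => hinner p, ← Finset.mul_sum]
          rw [hmain]
          simp only [mem_univ, if_true]
          ring
        funext j
        rw [Finset.sum_apply]
        have hterm : ∀ pq : Fin N × Fin N,
            ((2 * xp pq.1 * xm pq.2 / s
              + (if pq = (i0, i1) then (1 - 2*s)/2 else 0)
              + (if pq = (i1, i0) then (1 - 2*s)/2 else 0)) •
              ((if pq.1 = pq.2 then (1/2 : ℝ) • (Pi.single i0 1 - Pi.single i1 1)
                else (1/2 : ℝ) • (Pi.single pq.1 1 - Pi.single pq.2 1)) : Fin N → ℝ)) j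
            = (xp pq.1 * xm pq.2 / s) * ((if j = pq.1 then (1:ℝ) else 0) - (if j = pq.2 then 1 else 0))
              + (if pq = (i0, i1) then ((1 - 2*s)/4) * ((if j = i0 then (1:ℝ) else 0) - (if j = i1 then 1 else 0)) else 0)
              + (if pq = (i1, i0) then ((1 - 2*s)/4) * ((if j = i1 then (1:ℝ) else 0) - (if j = i0 then 1 else 0)) else 0) := by
          intro pq
          rcases eq_or_ne pq.1 pq.2 with hd | hd
          · have hz : xp pq.2 * xm pq.2 = 0 := hprod pq.2
            have hz2 : 2 * xp pq.2 * xm pq.2 = 0 := by rw [mul_assoc, hz, mul_zero]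
            have hne1 : pq ≠ (i0, i1) := by
              intro h; rw [h] at hd; exact h01 hd
            have hne2 : pq ≠ (i1, i0) := by
              intro h; rw [h] at hd; exact h01 hd.symm
            simp [hd, hne1, hne2, hz, hz2]
          · simp only [hd, if_false, Pi.smul_apply, Pi.sub_apply, Pi.single_apply, smul_eq_mul]
            rcases eq_or_ne pq (i0, i1) with h1 | h1
            · have h2 : pq ≠ (i1, i0) := by
                rw [h1]; intro h; exact h01 (congrArg Prod.fst h)
              subst h1
              simp only [if_pos rfl, if_neg h2, if_true]
              ring
            · rcases eq_or_ne pq (i1, i0) with h2 | h2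
              · subst h2
                simp only [if_neg h1, if_pos rfl, if_true]
                ring
              · simp only [if_neg h1, if_neg h2]
                ring
        rw [Finset.sum_congr rfl fun pq _ => hterm pq]
        rw [Finset.sum_add_distrib, Finset.sum_add_distrib,
          Finset.sum_ite_eq' univ (i0, i1), Finset.sum_ite_eq' univ (i1, i0)]
        simp only [mem_univ, if_true]
        have hsplit : ∀ pq : Fin N × Fin N,
            (xp pq.1 * xm pq.2 / s) * ((if j = pq.1 then (1:ℝ) else 0) - (if j = pq.2 then 1 else 0))
            = (if j = pq.1 then xp pq.1 * xm pq.2 / s else 0)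
              - (if j = pq.2 then xp pq.1 * xm pq.2 / s else 0) := by
          intro pq
          split_ifs <;> ring
        have e1 : ∑ pq : Fin N × Fin N, (if j = pq.1 then xp pq.1 * xm pq.2 / s else 0) = xp j := by
          rw [Fintype.sum_prod_type]
          dsimp only
          have h : ∀ p : Fin N, ∑ q : Fin N, (if j = p then xp p * xm q / s else 0)
              = if j = p then xp p else 0 := by
            intro p
            rcases eq_or_ne j p with h | h
            · simp only [h, if_true, if_pos rfl]
              rw [← Finset.sum_div, ← Finset.mul_sum, hsm]
              field_simp
            · simp [h]
          rw [Finset.sum_congr rfl fun p _ => h p, Finset.sum_ite_eq univ j]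
          simp
        have e2 : ∑ pq : Fin N × Fin N, (if j = pq.2 then xp pq.1 * xm pq.2 / s else 0) = xm j := by
          rw [Fintype.sum_prod_type]
          dsimp only
          have h : ∀ p : Fin N, ∑ q : Fin N, (if j = q then xp p * xm q / s else 0)
              = xp p * xm j / s := by
            intro p
            rw [Finset.sum_ite_eq univ j]
            simp
          rw [Finset.sum_congr rfl fun p _ => h p, ← Finset.sum_div, ← Finset.sum_mul, ← hsdef]
          field_simp
        have hmain2 : ∑ pq : Fin N × Fin N,
            (xp pq.1 * xm pq.2 / s) * ((if j = pq.1 then (1:ℝ) else 0) - (if j = pq.2 then 1 else 0))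
            = xp j - xm j := by
          rw [Finset.sum_congr rfl fun pq _ => hsplit pq, Finset.sum_sub_distrib, e1, e2]
        rw [hmain2, ← hsub j]
        ring
  · apply convexHull_min
    · rintro v ⟨p, q, hpq, rfl⟩
      constructor
      · simp only [crossPolytope, Set.mem_setOf_eq]
        have : ∀ i, |((1/2 : ℝ) • (Pi.single p 1 - Pi.single q 1) : Fin N → ℝ) i|
            = (if i = p then (1/2:ℝ) else 0) + (if i = q then (1/2:ℝ) else 0) := by
          intro i
          simp only [Pi.smul_apply, Pi.sub_apply, Pi.single_apply, smul_eq_mul]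
          rcases eq_or_ne i p with rfl | hip
          · rcases eq_or_ne i q with rfl | hiq
            · exact absurd rfl hpq
            · simp [hiq]
          · rcases eq_or_ne i q with rfl | hiq
            · simp [hip]
            · simp [hip, hiq]
        rw [Finset.sum_congr rfl (fun i _ => this i), Finset.sum_add_distrib,
          Finset.sum_ite_eq' univ p, Finset.sum_ite_eq' univ q]
        norm_num
      · simp only [hyperplaneH, Set.mem_setOf_eq]
        simp only [Pi.smul_apply, Pi.sub_apply, Pi.single_apply, smul_eq_mul]
        rw [Finset.sum_congr rfl (fun i _ => by ring_nf :
          ∀ i ∈ univ, (1/2 : ℝ) * ((if i = p then (1:ℝ) else 0) - (if i = q then 1 else 0))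
            = (1/2 : ℝ) * (if i = p then (1:ℝ) else 0) - (1/2) * (if i = q then 1 else 0))]
        rw [Finset.sum_sub_distrib, ← Finset.mul_sum, ← Finset.mul_sum,
          Finset.sum_ite_eq' univ p, Finset.sum_ite_eq' univ q]
        simp
    · intro a ha b hb s t hs ht hst
      obtain ⟨ha1, ha2⟩ := ha
      obtain ⟨hb1, hb2⟩ := hb
      replace ha1 : ∑ i, |a i| ≤ 1 := ha1
      replace ha2 : ∑ i, a i = 0 := ha2
      replace hb1 : ∑ i, |b i| ≤ 1 := hb1
      replace hb2 : ∑ i, b i = 0 := hb2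
      constructor
      · simp only [crossPolytope, Set.mem_setOf_eq]
        calc ∑ i, |(s • a + t • b) i| ≤ ∑ i, (s * |a i| + t * |b i|) := by
              apply Finset.sum_le_sum
              intro i _
              simp only [Pi.add_apply, Pi.smul_apply, smul_eq_mul]
              calc |s * a i + t * b i| ≤ |s * a i| + |t * b i| := abs_add_le _ _
                _ = s * |a i| + t * |b i| := by
                    rw [abs_mul, abs_mul, abs_of_nonneg hs, abs_of_nonneg ht]
          _ = s * ∑ i, |a i| + t * ∑ i, |b i| := by
              rw [Finset.sum_add_distrib, Finset.mul_sum, Finset.mul_sum]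
          _ ≤ s * 1 + t * 1 := by
              apply add_le_add <;> [exact mul_le_mul_of_nonneg_left ha1 hs;
                exact mul_le_mul_of_nonneg_left hb1 ht]
          _ = 1 := by linarith
      · simp only [hyperplaneH, Set.mem_setOf_eq]
        simp only [Pi.add_apply, Pi.smul_apply, smul_eq_mul]
        rw [Finset.sum_add_distrib, ← Finset.mul_sum, ← Finset.mul_sum, ha2, hb2]
        ring
end

section
/- For every N ≥ 2, the set of extreme points of P_N ∩ H equals V = {(e_p − e_q)/2 : p, q ∈ {1,…,N}, p ≠ q}. -/
open Finset

lemma sum_split {N : ℕ} {p q : Fin N} (hpq : p ≠ q) (f : Fin N → ℝ) :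
    ∑ i, f i = f p + f q + ∑ i ∈ (univ.erase p).erase q, f i := by
  rw [← Finset.add_sum_erase _ f (mem_univ p),
      ← Finset.add_sum_erase _ f (Finset.mem_erase.2 ⟨hpq.symm, mem_univ q⟩)]
  ring

lemma eq_vertex {N : ℕ} {p q : Fin N} (hpq : p ≠ q) {y : Fin N → ℝ}
    (hK : ∑ i, |y i| ≤ 1) (hH : ∑ i, y i = 0) (hf : y p - y q = 1) :
    y = (1 / 2 : ℝ) • (Pi.single p 1 - Pi.single q 1) := by
  have h1 : ∑ i, |y i| = |y p| + |y q| + ∑ i ∈ (univ.erase p).erase q, |y i| :=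
    sum_split hpq _
  have h2 : ∑ i, y i = y p + y q + ∑ i ∈ (univ.erase p).erase q, y i :=
    sum_split hpq _
  have habsp : y p ≤ |y p| := le_abs_self _
  have habsq : -y q ≤ |y q| := neg_le_abs _
  have hsnn : (0:ℝ) ≤ ∑ i ∈ (univ.erase p).erase q, |y i| :=
    Finset.sum_nonneg fun i _ => abs_nonneg _
  have hs0 : ∑ i ∈ (univ.erase p).erase q, |y i| = 0 := by linarith
  have hzero : ∀ i ∈ (univ.erase p).erase q, y i = 0 := by
    intro i hi
    exact abs_eq_zero.1
      ((Finset.sum_eq_zero_iff_of_nonneg fun i _ => abs_nonneg (y i)).1 hs0 i hi)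
  have hys : ∑ i ∈ (univ.erase p).erase q, y i = 0 := Finset.sum_eq_zero hzero
  have hyp : y p = 1/2 := by linarith
  have hyq : y q = -(1/2) := by linarith
  funext i
  rcases eq_or_ne i p with rfl | hip
  · simp [Pi.single_eq_same, Pi.single_eq_of_ne hpq, hyp]
  rcases eq_or_ne i q with rfl | hiq
  · simp [Pi.single_eq_same, Pi.single_eq_of_ne hpq.symm, hyq]
  · have : y i = 0 := hzero i (Finset.mem_erase.2 ⟨hiq, Finset.mem_erase.2 ⟨hip, mem_univ i⟩⟩)
    simp [this, Pi.single_eq_of_ne hip, Pi.single_eq_of_ne hiq]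

lemma fbound {N : ℕ} {p q : Fin N} (hpq : p ≠ q) {y : Fin N → ℝ}
    (hK : ∑ i, |y i| ≤ 1) : y p - y q ≤ 1 := by
  have h := sum_split hpq (fun i => |y i|)
  have hsnn : (0:ℝ) ≤ ∑ i ∈ (univ.erase p).erase q, |y i| :=
    Finset.sum_nonneg fun i _ => abs_nonneg _
  try simp only at h
  linarith [le_abs_self (y p), neg_le_abs (y q)]

lemma vertex_apply_p {N : ℕ} {p q : Fin N} (hpq : p ≠ q) :
    (((1/2:ℝ) • (Pi.single p (1:ℝ) - Pi.single q 1) : Fin N → ℝ)) p = 1/2 := by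
  simp [Pi.single_eq_same, Pi.single_eq_of_ne hpq]

lemma vertex_apply_q {N : ℕ} {p q : Fin N} (hpq : p ≠ q) :
    (((1/2:ℝ) • (Pi.single p (1:ℝ) - Pi.single q 1) : Fin N → ℝ)) q = -(1/2) := by
  simp [Pi.single_eq_same, Pi.single_eq_of_ne hpq.symm]

lemma vertex_apply_other {N : ℕ} {p q i : Fin N} (hip : i ≠ p) (hiq : i ≠ q) :
    (((1/2:ℝ) • (Pi.single p (1:ℝ) - Pi.single q 1) : Fin N → ℝ)) i = 0 := by
  simp [Pi.single_eq_of_ne hip, Pi.single_eq_of_ne hiq]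

lemma vertex_mem {N : ℕ} {p q : Fin N} (hpq : p ≠ q) :
    (1/2:ℝ) • (Pi.single p (1:ℝ) - Pi.single q 1) ∈ crossPolytope N ∩ hyperplaneH N := by
  set v : Fin N → ℝ := (1/2:ℝ) • (Pi.single p (1:ℝ) - Pi.single q 1) with hv
  have hs : ∀ i ∈ (univ.erase p).erase q, v i = 0 := by
    intro i hi
    obtain ⟨hiq, hi'⟩ := Finset.mem_erase.1 hi
    obtain ⟨hip, -⟩ := Finset.mem_erase.1 hi'
    exact vertex_apply_other hip hiq
  have hvp : v p = 1/2 := vertex_apply_p hpq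
  have hvq : v q = -(1/2) := vertex_apply_q hpq
  constructor
  · show ∑ i, |v i| ≤ 1
    rw [sum_split hpq (fun i => |v i|)]
    try simp only
    rw [hvp, hvq]
    have : ∑ i ∈ (univ.erase p).erase q, |v i| = 0 :=
      Finset.sum_eq_zero fun i hi => by rw [hs i hi, abs_zero]
    rw [this, show |(1:ℝ)/2| = 1/2 from abs_of_pos (by norm_num),
      show |(-(1/2):ℝ)| = 1/2 from by rw [abs_neg]; exact abs_of_pos (by norm_num)]
    norm_num
  · show ∑ i, v i = 0
    rw [sum_split hpq v, hvp, hvq, Finset.sum_eq_zero hs]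
    ring

lemma vertex_extreme {N : ℕ} {p q : Fin N} (hpq : p ≠ q) :
    (1/2:ℝ) • (Pi.single p (1:ℝ) - Pi.single q 1) ∈
      Set.extremePoints ℝ (crossPolytope N ∩ hyperplaneH N) := by
  refine ⟨vertex_mem hpq, ?_⟩
  intro x1 hx1 x2 hx2 hseg
  obtain ⟨a, b, ha, hb, hab, hsum⟩ := hseg
  have h1 := congrFun hsum p
  have h2 := congrFun hsum q
  rw [vertex_apply_p hpq] at h1
  rw [vertex_apply_q hpq] at h2
  simp only [Pi.add_apply, Pi.smul_apply, smul_eq_mul] at h1 h2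
  have key : a * (x1 p - x1 q) + b * (x2 p - x2 q) = 1 := by linear_combination h1 - h2
  have hf1 : x1 p - x1 q ≤ 1 := fbound hpq hx1.1
  have hf2 : x2 p - x2 q ≤ 1 := fbound hpq hx2.1
  have hf1e : x1 p - x1 q = 1 := by
    by_contra h
    have h' : x1 p - x1 q < 1 := lt_of_le_of_ne hf1 h
    nlinarith [mul_lt_mul_of_pos_left h' ha, mul_le_mul_of_nonneg_left hf2 hb.le]
  have hf2e : x2 p - x2 q = 1 := by
    by_contra h
    have h' : x2 p - x2 q < 1 := lt_of_le_of_ne hf2 h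
    nlinarith [mul_lt_mul_of_pos_left h' hb, mul_le_mul_of_nonneg_left hf1 ha.le]
  exact eq_vertex hpq hx1.1 hx1.2 hf1e

lemma mem_perturb {N : ℕ} {x : Fin N → ℝ} {p q : Fin N} (hpq : p ≠ q)
    (hH : ∑ i, x i = 0) (t : ℝ)
    (habs : |x p + t| + |x q - t| + ∑ i ∈ (univ.erase p).erase q, |x i| ≤ 1) :
    x + t • (Pi.single p (1:ℝ) - Pi.single q 1) ∈ crossPolytope N ∩ hyperplaneH N := by
  set y := x + t • (Pi.single p (1:ℝ) - Pi.single q 1) with hy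
  have hyp : y p = x p + t := by
    simp [hy, Pi.single_eq_same, Pi.single_eq_of_ne hpq]
  have hyq : y q = x q - t := by
    simp [hy, Pi.single_eq_same, Pi.single_eq_of_ne hpq.symm]
    ring
  have hys : ∀ i ∈ (univ.erase p).erase q, y i = x i := by
    intro i hi
    obtain ⟨hiq, hi'⟩ := Finset.mem_erase.1 hi
    obtain ⟨hip, -⟩ := Finset.mem_erase.1 hi'
    simp [hy, Pi.single_eq_of_ne hip, Pi.single_eq_of_ne hiq]
  constructor
  · show ∑ i, |y i| ≤ 1
    rw [sum_split hpq (fun i => |y i|)]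
    try simp only
    rw [hyp, hyq, Finset.sum_congr rfl fun i hi => by rw [hys i hi]]
    exact habs
  · show ∑ i, y i = 0
    rw [sum_split hpq y, hyp, hyq, Finset.sum_congr rfl hys]
    rw [sum_split hpq x] at hH
    linarith

lemma not_extreme_of_perturb {N : ℕ} {x d : Fin N → ℝ}
    (hd : d ≠ 0)
    (h1 : x + d ∈ crossPolytope N ∩ hyperplaneH N)
    (h2 : x - d ∈ crossPolytope N ∩ hyperplaneH N) :
    x ∉ Set.extremePoints ℝ (crossPolytope N ∩ hyperplaneH N) := by
  intro hx
  have hseg : x ∈ openSegment ℝ (x - d) (x + d) :=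
    ⟨1/2, 1/2, by norm_num, by norm_num, by norm_num, by module⟩
  have h : x + d = x := hx.2 h1 h2 (by rw [openSegment_symm]; exact hseg)
  apply hd
  calc d = (x + d) - x := by abel
  _ = 0 := by rw [h]; simp

lemma not_extreme_aux {N : ℕ} {x : Fin N → ℝ} {p q : Fin N} (hpq : p ≠ q)
    (hH : ∑ i, x i = 0) {ε : ℝ} (hε : 0 < ε)
    (habs : ∀ t : ℝ, |t| ≤ ε →
      |x p + t| + |x q - t| + ∑ i ∈ (univ.erase p).erase q, |x i| ≤ 1) :
    x ∉ Set.extremePoints ℝ (crossPolytope N ∩ hyperplaneH N) := by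
  apply not_extreme_of_perturb (d := ε • (Pi.single p (1:ℝ) - Pi.single q 1))
  · intro h
    have h0 := congrFun h p
    simp [Pi.single_eq_same, Pi.single_eq_of_ne hpq] at h0
    linarith
  · exact mem_perturb hpq hH ε (habs ε (by rw [abs_of_pos hε]))
  · have h := mem_perturb hpq hH (-ε) (habs (-ε) (by rw [abs_neg, abs_of_pos hε]))
    have heq : x - ε • (Pi.single p (1:ℝ) - Pi.single q 1)
        = x + (-ε) • (Pi.single p (1:ℝ) - Pi.single q 1) := by module
    rw [heq]
    exact h

lemma abs_perturb {a b t : ℝ} (hab : 0 < a * b) (ht1 : |t| ≤ |a|) (ht2 : |t| ≤ |b|) :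
    |a + t| + |b - t| = |a| + |b| := by
  rcases mul_pos_iff.1 hab with ⟨ha, hb⟩ | ⟨ha, hb⟩
  · have h1 := abs_le.1 (ht1.trans_eq (abs_of_pos ha))
    have h2 := abs_le.1 (ht2.trans_eq (abs_of_pos hb))
    rw [abs_of_pos ha, abs_of_pos hb, abs_of_nonneg (by linarith [h1.1]),
      abs_of_nonneg (by linarith [h2.2])]
    ring
  · have h1 := abs_le.1 (ht1.trans_eq (abs_of_neg ha))
    have h2 := abs_le.1 (ht2.trans_eq (abs_of_neg hb))
    rw [abs_of_neg ha, abs_of_neg hb, abs_of_nonpos (by linarith [h1.2]),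
      abs_of_nonpos (by linarith [h2.1])]
    ring

lemma not_extreme_same_sign {N : ℕ} {x : Fin N → ℝ}
    (hK : ∑ i, |x i| ≤ 1) (hH : ∑ i, x i = 0)
    {p q : Fin N} (hpq : p ≠ q) (hsign : 0 < x p * x q) :
    x ∉ Set.extremePoints ℝ (crossPolytope N ∩ hyperplaneH N) := by
  have hp : x p ≠ 0 := fun h => by simp [h] at hsign
  have hq : x q ≠ 0 := fun h => by simp [h] at hsign
  have hε : 0 < min |x p| |x q| := lt_min (abs_pos.2 hp) (abs_pos.2 hq)
  refine not_extreme_aux hpq hH hε ?_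
  intro t ht
  have heq := abs_perturb hsign (ht.trans (min_le_left _ _)) (ht.trans (min_le_right _ _))
  have hsx := sum_split hpq (fun i => |x i|)
  try simp only at hsx
  linarith

lemma not_extreme_small {N : ℕ} (hN : 2 ≤ N) {x : Fin N → ℝ}
    (hK : ∑ i, |x i| < 1) (hH : ∑ i, x i = 0) :
    x ∉ Set.extremePoints ℝ (crossPolytope N ∩ hyperplaneH N) := by
  have hpq : (⟨0, by omega⟩ : Fin N) ≠ ⟨1, by omega⟩ := by
    simp [Fin.ext_iff]
  set p : Fin N := ⟨0, by omega⟩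
  set q : Fin N := ⟨1, by omega⟩
  have hε : (0:ℝ) < (1 - ∑ i, |x i|) / 2 := by linarith
  refine not_extreme_aux hpq hH hε ?_
  intro t ht
  have h1 : |x p + t| ≤ |x p| + |t| := abs_add_le _ _
  have h2 : |x q - t| ≤ |x q| + |t| := by
    rw [sub_eq_add_neg]
    exact (abs_add_le _ _).trans_eq (by rw [abs_neg])
  have hsx := sum_split hpq (fun i => |x i|)
  try simp only at hsx
  linarith

theorem extremePoints_crossPolytope_inter_hyperplane (N : ℕ) (hN : 2 ≤ N) :
    Set.extremePoints ℝ (crossPolytope N ∩ hyperplaneH N) = vertexSetV N := by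
  ext x
  constructor
  · intro hx
    have hK : ∑ i, |x i| ≤ 1 := hx.1.1
    have hH : ∑ i, x i = 0 := hx.1.2
    rcases lt_or_eq_of_le hK with hlt | hsum1
    · exact absurd hx (not_extreme_small hN hlt hH)
    · have hex : ∃ p, 0 < x p := by
        by_contra h
        push_neg at h
        have hz : ∀ i ∈ univ, x i = 0 :=
          (Finset.sum_eq_zero_iff_of_nonpos fun i _ => h i).1 hH
        have : ∑ i, |x i| = 0 := Finset.sum_eq_zero fun i hi => by rw [hz i hi, abs_zero]
        rw [this] at hsum1
        norm_num at hsum1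
      have hexq : ∃ q, x q < 0 := by
        by_contra h
        push_neg at h
        have hz : ∀ i ∈ univ, x i = 0 :=
          (Finset.sum_eq_zero_iff_of_nonneg fun i _ => h i).1 hH
        have : ∑ i, |x i| = 0 := Finset.sum_eq_zero fun i hi => by rw [hz i hi, abs_zero]
        rw [this] at hsum1
        norm_num at hsum1
      obtain ⟨p, hp⟩ := hex
      obtain ⟨q, hq⟩ := hexq
      have hpq : p ≠ q := fun h => by rw [h] at hp; linarith
      have hsupp : ∀ i, i ≠ p → i ≠ q → x i = 0 := by
        intro i hip hiq
        by_contra h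
        rcases Ne.lt_or_gt h with hneg | hpos
        · exact (not_extreme_same_sign hK hH hiq (mul_pos_of_neg_of_neg hneg hq)) hx
        · exact (not_extreme_same_sign hK hH hip (mul_pos hpos hp)) hx
      have hszero : ∑ i ∈ (univ.erase p).erase q, |x i| = 0 := by
        refine Finset.sum_eq_zero fun i hi => ?_
        obtain ⟨hiq, hi'⟩ := Finset.mem_erase.1 hi
        obtain ⟨hip, -⟩ := Finset.mem_erase.1 hi'
        rw [hsupp i hip hiq, abs_zero]
      have hsx := sum_split hpq (fun i => |x i|)
      try simp only at hsx
      have hfpq : x p - x q = 1 := by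
        rw [abs_of_pos hp, abs_of_neg hq] at hsx
        linarith
      exact ⟨p, q, hpq, eq_vertex hpq hK hH hfpq⟩
  · rintro ⟨p, q, hpq, rfl⟩
    exact vertex_extreme hpq
end

section
/- Let α ∈ (0, 1/2], β ∈ [0, α/2), and let S be an (α,β)-admissible N×N real matrix. Then for every pair of distinct row indices p, q, it holds that ∑_{i=1}^N min{S_{pi}, S_{qi}} ≥ α − 2β. -/
open Finset

/-- An `N × N` real matrix `S` is `(α,β)`-admissible if every row sums to `1`,
the negative part of every row sums to at least `-β`, and every pair of distinct
rows shares a column where both entries are at least `α` (neighbor-shared). -/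
def Admissible {N : ℕ} (α β : ℝ) (S : Matrix (Fin N) (Fin N) ℝ) : Prop :=
  (∀ i, ∑ j, S i j = 1) ∧ (∀ i, -β ≤ ∑ j, min (S i j) 0) ∧
    (∀ p q : Fin N, p ≠ q → ∃ i, α ≤ S p i ∧ α ≤ S q i)

theorem sum_min_rows_ge {N : ℕ} (α β : ℝ) (hα : 0 < α ∧ α ≤ 1 / 2)
    (hβ : 0 ≤ β ∧ β < α / 2) (S : Matrix (Fin N) (Fin N) ℝ)
    (hS : Admissible α β S) (p q : Fin N) (hpq : p ≠ q) :
    α - 2 * β ≤ ∑ i, min (S p i) (S q i) := by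
  obtain ⟨hrow, hneg, hshare⟩ := hS
  obtain ⟨i₀, hp0, hq0⟩ := hshare p q hpq
  have h1 : ∀ i, min (S p i) 0 + min (S q i) 0 ≤ min (S p i) (S q i) := by
    intro i
    rcases le_total (S p i) (S q i) with h | h
    · rw [min_eq_left h]
      linarith [min_le_left (S p i) (0:ℝ), min_le_right (S q i) (0:ℝ)]
    · rw [min_eq_right h]
      linarith [min_le_right (S p i) (0:ℝ), min_le_left (S q i) (0:ℝ)]
  have hsplit := Finset.add_sum_erase Finset.univ (fun i => min (S p i) (S q i))
    (Finset.mem_univ i₀)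
  have hsplitp := Finset.add_sum_erase Finset.univ (fun i => min (S p i) 0)
    (Finset.mem_univ i₀)
  have hsplitq := Finset.add_sum_erase Finset.univ (fun i => min (S q i) 0)
    (Finset.mem_univ i₀)
  have h2 : ∑ i ∈ Finset.univ.erase i₀, (min (S p i) 0 + min (S q i) 0)
      ≤ ∑ i ∈ Finset.univ.erase i₀, min (S p i) (S q i) :=
    Finset.sum_le_sum fun i _ => h1 i
  rw [Finset.sum_add_distrib] at h2
  have hp00 : min (S p i₀) 0 = 0 := min_eq_right (by linarith [hα.1])
  have hq00 : min (S q i₀) 0 = 0 := min_eq_right (by linarith [hα.1])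
  have hmin0 : α ≤ min (S p i₀) (S q i₀) := le_min hp0 hq0
  have hnp := hneg p
  have hnq := hneg q
  simp only [hp00, hq00, zero_add] at hsplitp hsplitq
  linarith [hsplit, hsplitp, hsplitq]
end

section
/- Let α ∈ (0, 1/2], β ∈ [0, α/2), and let S be an (α,β)-admissible N×N real matrix. Then for every pair of distinct row indices p, q, it holds that (1/2) ∑_{i=1}^N |S_{pi} − S_{qi}| ≤ 1 − α + 2β; in particular the ergodic coefficient η(S) = max_{p≠q} (1/2)∑_i |S_{pi} − S_{qi}| satisfies η(S) ≤ 1 − α + 2β < 1. -/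
open Finset

theorem ergodic_coefficient_bound {N : ℕ} (α β : ℝ) (hα : 0 < α ∧ α ≤ 1 / 2)
    (hβ : 0 ≤ β ∧ β < α / 2) (S : Matrix (Fin N) (Fin N) ℝ)
    (hS : Admissible α β S) :
    (∀ p q : Fin N, p ≠ q →
      (1 / 2 : ℝ) * ∑ i, |S p i - S q i| ≤ 1 - α + 2 * β) ∧ 1 - α + 2 * β < 1 := by
  obtain ⟨hrow, hneg, hshare⟩ := hS
  refine ⟨?_, by linarith [hβ.2]⟩
  intro p q hpq
  obtain ⟨i₀, hpi, hqi⟩ := hshare p q hpq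
  have key : ∀ a b : ℝ, |a - b| = a + b - 2 * min a b := by
    intro a b
    rcases le_total a b with h | h
    · rw [abs_of_nonpos (by linarith), min_eq_left h]; ring
    · rw [abs_of_nonneg (by linarith), min_eq_right h]; ring
  have h1 : ∑ i, |S p i - S q i| = 2 - 2 * ∑ i, min (S p i) (S q i) := by
    simp_rw [key]
    rw [Finset.sum_sub_distrib, Finset.sum_add_distrib, ← Finset.mul_sum,
      hrow p, hrow q]
    ring
  have hmin2 : ∀ a b : ℝ, min a 0 + min b 0 ≤ min a b := by
    intro a b
    refine le_min ?_ ?_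
    · have := min_le_left a 0; have := min_le_right b 0; linarith
    · have := min_le_right a 0; have := min_le_left b 0; linarith
  have herase : ∀ r : Fin N, -β ≤ ∑ i ∈ univ.erase i₀, min (S r i) 0 := by
    intro r
    have h0 : min (S r i₀) 0 ≤ 0 := min_le_right _ _
    have hsplit : min (S r i₀) 0 + ∑ i ∈ univ.erase i₀, min (S r i) 0
        = ∑ i, min (S r i) 0 := Finset.add_sum_erase univ (fun i => min (S r i) 0) (mem_univ i₀)
    have := hneg r
    linarith
  have hM : α - 2 * β ≤ ∑ i, min (S p i) (S q i) := by
    rw [← Finset.add_sum_erase univ (fun i => min (S p i) (S q i)) (mem_univ i₀)]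
    have h0 : α ≤ min (S p i₀) (S q i₀) := le_min hpi hqi
    have hsum : ∑ i ∈ univ.erase i₀, (min (S p i) 0 + min (S q i) 0)
        ≤ ∑ i ∈ univ.erase i₀, min (S p i) (S q i) :=
      Finset.sum_le_sum fun i _ => hmin2 _ _
    rw [Finset.sum_add_distrib] at hsum
    have hp := herase p
    have hq := herase q
    linarith
  rw [h1]; linarith
end
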